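/- arXiv:2004.02515 — 3 statements merged into one kernel-verified Lean document; each statement's English description precedes it below -/
import Mathlib

section
/- For every integer m ≥ 0, the element tr Fᵐ = ∑_{i₁,…,i_m=1}^N F_{i₁i₂}F_{i₂i₃}⋯F_{i_m i₁} belongs to the center of the universal enveloping algebra U(𝔤). (Corollary 2.2.) -/
set_option synthInstance.maxHeartbeats 1000000
set_option maxHeartbeats 1000000

attribute [local instance 100] LieRing.ofAssociativeRing

/- Context: 𝔤 a finite-dimensional simple Lie algebra over ℂ, B a nondegenerate symmetric
invariant bilinear form, dual bases Jup = (Jᵃ), Jlo = (J_a), ρ a faithful representation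
on ℂᴺ, f_{ij} = −∑ₐ (ρ(Jᵃ))_{ij}·J_a, F_{ij} = ι(f_{ij}) ∈ U(𝔤). -/

/-- The element `f_{ij} = −∑ₐ (ρ(Jᵃ))_{ij}·J_a ∈ 𝔤`. -/
noncomputable def fElem {d N : ℕ} {g : Type} [LieRing g] [LieAlgebra ℂ g]
    (ρ : g →ₗ⁅ℂ⁆ Matrix (Fin N) (Fin N) ℂ)
    (Jup Jlo : Module.Basis (Fin d) ℂ g) (i j : Fin N) : g :=
  -(∑ a : Fin d, (ρ (Jup a)) i j • Jlo a)

/-- The matrix `F` over `U(𝔤)` with entries `F_{ij} = ι(f_{ij})`. -/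
noncomputable def FMat {d N : ℕ} {g : Type} [LieRing g] [LieAlgebra ℂ g]
    (ρ : g →ₗ⁅ℂ⁆ Matrix (Fin N) (Fin N) ℂ)
    (Jup Jlo : Module.Basis (Fin d) ℂ g) :
    Matrix (Fin N) (Fin N) (UniversalEnvelopingAlgebra ℂ g) :=
  Matrix.of fun i j => UniversalEnvelopingAlgebra.ι ℂ (fElem ρ Jup Jlo i j)

/-! ### Auxiliary lemmas -/

open UniversalEnvelopingAlgebra in
theorem aux_adjoin_range_ι_eq_top (R L : Type*) [CommRing R] [LieRing L] [LieAlgebra R L] :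
    Algebra.adjoin R (Set.range (ι R : L → UniversalEnvelopingAlgebra R L)) = ⊤ := by
  set S := Algebra.adjoin R (Set.range (ι R : L → UniversalEnvelopingAlgebra R L)) with hS
  let f : L →ₗ⁅R⁆ S :=
    { toFun := fun x => ⟨ι R x, Algebra.subset_adjoin ⟨x, rfl⟩⟩
      map_add' := fun x y => by ext; simp
      map_smul' := fun c x => by ext; simp
      map_lie' := fun {x y} => by
        ext
        simp [Ring.lie_def] }
  have key : ∀ u : UniversalEnvelopingAlgebra R L, S.val (lift R f u) = u := by
    have : S.val.comp (lift R f) = AlgHom.id R _ := by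
      ext x
      simp [f, lift_ι_apply]
    intro u
    calc S.val (lift R f u) = (S.val.comp (lift R f)) u := rfl
    _ = u := by rw [this]; rfl
  rw [eq_top_iff]
  intro u _
  exact key u ▸ (lift R f u).2

theorem aux_comm_pow {A : Type*} [Ring A] (D F X : A) (h : D*F - F*D = F*X - X*F) :
    ∀ m : ℕ, D*F^m - F^m*D = F^m*X - X*F^m := by
  intro m
  induction m with
  | zero => simp
  | succ m ih =>
    have h1 : D*F^m = (F^m*X - X*F^m) + F^m*D := by rw [← ih]; abel
    have h2 : D*F = (F*X - X*F) + F*D := by rw [← h]; abel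
    rw [pow_succ, ← mul_assoc, h1, add_mul, mul_assoc (F^m) D F, h2]
    noncomm_ring

section Aux2
variable {N : ℕ} {A R : Type*} [CommRing R] [Ring A] [Algebra R A]

theorem aux_smul_one_mul_apply (u : A) (M : Matrix (Fin N) (Fin N) A) (i j : Fin N) :
    ((u • (1 : Matrix (Fin N) (Fin N) A)) * M) i j = u * M i j := by
  simp [Matrix.mul_apply, Matrix.one_apply, ite_mul, mul_ite]

theorem aux_mul_smul_one_apply (u : A) (M : Matrix (Fin N) (Fin N) A) (i j : Fin N) :
    (M * (u • (1 : Matrix (Fin N) (Fin N) A))) i j = M i j * u := by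
  simp [Matrix.mul_apply, Matrix.one_apply, ite_mul, mul_ite]

theorem aux_trace_smul_one_mul (u : A) (M : Matrix (Fin N) (Fin N) A) :
    ((u • (1 : Matrix (Fin N) (Fin N) A)) * M).trace = u * M.trace := by
  simp [Matrix.trace, aux_smul_one_mul_apply, Finset.mul_sum]

theorem aux_trace_mul_smul_one (u : A) (M : Matrix (Fin N) (Fin N) A) :
    (M * (u • (1 : Matrix (Fin N) (Fin N) A))).trace = M.trace * u := by
  simp [Matrix.trace, aux_mul_smul_one_apply, Finset.sum_mul]

theorem aux_trace_comm_central (M : Matrix (Fin N) (Fin N) A) (Y : Matrix (Fin N) (Fin N) R) :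
    (M * Y.map (algebraMap R A)).trace = (Y.map (algebraMap R A) * M).trace := by
  simp only [Matrix.trace, Matrix.diag, Matrix.mul_apply, Matrix.map_apply]
  rw [Finset.sum_comm]
  refine Finset.sum_congr rfl fun i _ => Finset.sum_congr rfl fun k _ => ?_
  rw [Algebra.commutes]

end Aux2

section Aux3
variable {d N : ℕ} {g : Type} [LieRing g] [LieAlgebra ℂ g]
    (B : g →ₗ[ℂ] g →ₗ[ℂ] ℂ)
    (hBinv : ∀ x y z, B ⁅x, y⁆ z = B x ⁅y, z⁆)
    (Jup Jlo : Module.Basis (Fin d) ℂ g)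
    (hdual : ∀ a b, B (Jlo a) (Jup b) = if a = b then 1 else 0)
    (ρ : g →ₗ⁅ℂ⁆ Matrix (Fin N) (Fin N) ℂ)

include hdual in
theorem aux_repr1 (y : g) : y = ∑ b : Fin d, B y (Jup b) • Jlo b := by
  have : (LinearMap.id : g →ₗ[ℂ] g)
      = { toFun := fun y => ∑ b : Fin d, B y (Jup b) • Jlo b
          map_add' := by intros; simp [add_smul, Finset.sum_add_distrib]
          map_smul' := by intros; simp [Finset.smul_sum, smul_smul] } := by
    apply Jlo.ext
    intro a
    simp [hdual, fun b => hdual b a, ite_smul]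
  simpa using LinearMap.ext_iff.mp this y

include hdual in
theorem aux_repr2 (y : g) : y = ∑ b : Fin d, B (Jlo b) y • Jup b := by
  have : (LinearMap.id : g →ₗ[ℂ] g)
      = { toFun := fun y => ∑ b : Fin d, B (Jlo b) y • Jup b
          map_add' := by intros; simp [add_smul, Finset.sum_add_distrib]
          map_smul' := by intros; simp [Finset.smul_sum, smul_smul] } := by
    apply Jup.ext
    intro a
    simp [hdual, ite_smul]
  simpa using LinearMap.ext_iff.mp this y

include hBinv hdual in
theorem aux_key_lie (x : g) (i j : Fin N) :
    ⁅x, fElem ρ Jup Jlo i j⁆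
      = ∑ k, (ρ x) k j • fElem ρ Jup Jlo i k - ∑ k, (ρ x) i k • fElem ρ Jup Jlo k j := by
  have h1 : ∀ a : Fin d, ⁅x, Jlo a⁆ = ∑ b : Fin d, (- B (Jlo a) ⁅x, Jup b⁆) • Jlo b := by
    intro a
    conv_lhs => rw [aux_repr1 B Jup Jlo hdual ⁅x, Jlo a⁆]
    congr 1; ext b
    congr 1
    have : B ⁅x, Jlo a⁆ (Jup b) = - B (Jlo a) ⁅x, Jup b⁆ := by
      have h := hBinv (Jlo a) x (Jup b)
      have h2 : (⁅x, Jlo a⁆ : g) = -⁅Jlo a, x⁆ := by rw [← lie_skew]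
      rw [h2, map_neg, LinearMap.neg_apply, h]
    rw [this]
  have h2 : ∀ b : Fin d,
      (∑ a : Fin d, (ρ (Jup a)) i j • (B (Jlo a) ⁅x, Jup b⁆)) = (ρ ⁅x, Jup b⁆) i j := by
    intro b
    have : (ρ (∑ c : Fin d, B (Jlo c) ⁅x, Jup b⁆ • Jup c) : Matrix (Fin N) (Fin N) ℂ)
        = ∑ c : Fin d, B (Jlo c) ⁅x, Jup b⁆ • ρ (Jup c) := by
      rw [show (ρ (∑ c : Fin d, B (Jlo c) ⁅x, Jup b⁆ • Jup c) : Matrix (Fin N) (Fin N) ℂ)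
          = ρ.toLinearMap (∑ c : Fin d, B (Jlo c) ⁅x, Jup b⁆ • Jup c) from rfl]
      simp
    conv_rhs => rw [aux_repr2 B Jup Jlo hdual ⁅x, Jup b⁆, this]
    simp [Matrix.sum_apply, mul_comm]
  have swap : ∀ (f : Fin N → Fin d → g), ∑ k, ∑ b, f k b = ∑ b, ∑ k, f k b :=
    fun f => Finset.sum_comm
  have swap' : ∀ (f : Fin d → Fin d → g), ∑ k, ∑ b, f k b = ∑ b, ∑ k, f k b :=
    fun f => Finset.sum_comm
  calc ⁅x, fElem ρ Jup Jlo i j⁆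
      = -∑ a : Fin d, (ρ (Jup a)) i j • ⁅x, Jlo a⁆ := by
        rw [fElem, lie_neg, neg_inj,
          show ⁅x, ∑ a : Fin d, (ρ (Jup a)) i j • Jlo a⁆
            = LieAlgebra.ad ℂ g x (∑ a : Fin d, (ρ (Jup a)) i j • Jlo a) from rfl,
          map_sum]
        simp [LieAlgebra.ad_apply]
    _ = ∑ b : Fin d, (∑ a : Fin d, (ρ (Jup a)) i j • B (Jlo a) ⁅x, Jup b⁆) • Jlo b := by
        simp only [h1, smul_neg, Finset.smul_sum, smul_smul, Finset.sum_neg_distrib, neg_neg]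
        rw [swap']
        simp only [Finset.sum_smul, smul_smul]
        simp [smul_smul]
    _ = ∑ b : Fin d, (ρ ⁅x, Jup b⁆) i j • Jlo b := by
        simp only [h2]
    _ = ∑ k, (ρ x) k j • fElem ρ Jup Jlo i k - ∑ k, (ρ x) i k • fElem ρ Jup Jlo k j := by
        simp only [LieHom.map_lie, Ring.lie_def, Matrix.sub_apply, Matrix.mul_apply, fElem,
          smul_neg, sub_smul, Finset.sum_smul, Finset.smul_sum, smul_smul,
          Finset.sum_sub_distrib, Finset.sum_neg_distrib, sub_neg_eq_add]
        rw [swap fun k b => ((ρ x) i k * (ρ (Jup b)) k j) • Jlo b,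
            swap fun k b => ((ρ x) k j * (ρ (Jup b)) i k) • Jlo b]
        rw [sub_eq_neg_add]
        congr 1
        congr 1
        refine Finset.sum_congr rfl fun b _ => ?_
        refine Finset.sum_congr rfl fun k _ => ?_
        rw [mul_comm]

include hBinv hdual in
theorem aux_key_U (x : g) :
    ((UniversalEnvelopingAlgebra.ι ℂ x) •
        (1 : Matrix (Fin N) (Fin N) (UniversalEnvelopingAlgebra ℂ g))) * FMat ρ Jup Jlo
      - FMat ρ Jup Jlo * ((UniversalEnvelopingAlgebra.ι ℂ x) • 1)
    = FMat ρ Jup Jlo * ((ρ x).map (algebraMap ℂ (UniversalEnvelopingAlgebra ℂ g)))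
      - ((ρ x).map (algebraMap ℂ (UniversalEnvelopingAlgebra ℂ g))) * FMat ρ Jup Jlo := by
  ext i j
  simp only [Matrix.sub_apply]
  rw [aux_smul_one_mul_apply, aux_mul_smul_one_apply]
  simp only [Matrix.mul_apply, Matrix.map_apply]
  have hF : ∀ i j, FMat ρ Jup Jlo i j = UniversalEnvelopingAlgebra.ι ℂ (fElem ρ Jup Jlo i j) :=
    fun _ _ => rfl
  calc UniversalEnvelopingAlgebra.ι ℂ x * FMat ρ Jup Jlo i j
        - FMat ρ Jup Jlo i j * UniversalEnvelopingAlgebra.ι ℂ x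
      = ⁅UniversalEnvelopingAlgebra.ι ℂ x,
          UniversalEnvelopingAlgebra.ι ℂ (fElem ρ Jup Jlo i j)⁆ := by
        rw [hF, Ring.lie_def]
    _ = UniversalEnvelopingAlgebra.ι ℂ ⁅x, fElem ρ Jup Jlo i j⁆ := by
        rw [LieHom.map_lie]
    _ = ∑ k, FMat ρ Jup Jlo i k * algebraMap ℂ _ ((ρ x) k j)
        - ∑ k, algebraMap ℂ _ ((ρ x) i k) * FMat ρ Jup Jlo k j := by
        rw [aux_key_lie B hBinv Jup Jlo hdual ρ x i j,
          show (UniversalEnvelopingAlgebra.ι ℂ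
              (∑ k, (ρ x) k j • fElem ρ Jup Jlo i k - ∑ k, (ρ x) i k • fElem ρ Jup Jlo k j)
              : UniversalEnvelopingAlgebra ℂ g)
            = (UniversalEnvelopingAlgebra.ι ℂ : g →ₗ⁅ℂ⁆ UniversalEnvelopingAlgebra ℂ g).toLinearMap
              (∑ k, (ρ x) k j • fElem ρ Jup Jlo i k - ∑ k, (ρ x) i k • fElem ρ Jup Jlo k j)
            from rfl,
          map_sub, map_sum, map_sum]
        simp only [map_smul]
        congr 1
        · refine Finset.sum_congr rfl fun k _ => ?_
          rw [show ((UniversalEnvelopingAlgebra.ι ℂ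
                : g →ₗ⁅ℂ⁆ UniversalEnvelopingAlgebra ℂ g).toLinearMap (fElem ρ Jup Jlo i k))
              = FMat ρ Jup Jlo i k from rfl, Algebra.smul_def, Algebra.commutes]

end Aux3

/-- for every `m ≥ 0`, the element `tr Fᵐ` is central in `U(𝔤)`. -/
theorem trace_power_central
    {d N : ℕ} {g : Type} [LieRing g] [LieAlgebra ℂ g]
    [FiniteDimensional ℂ g] [LieAlgebra.IsSimple ℂ g]
    (B : g →ₗ[ℂ] g →ₗ[ℂ] ℂ)
    (hBsymm : ∀ x y, B x y = B y x)
    (hBinv : ∀ x y z, B ⁅x, y⁆ z = B x ⁅y, z⁆)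
    (hBnondeg : ∀ x, (∀ y, B x y = 0) → x = 0)
    (Jup Jlo : Module.Basis (Fin d) ℂ g)
    (hdual : ∀ a b, B (Jlo a) (Jup b) = if a = b then 1 else 0)
    (ρ : g →ₗ⁅ℂ⁆ Matrix (Fin N) (Fin N) ℂ)
    (hρ : Function.Injective ρ)
    (m : ℕ) :
    ((FMat ρ Jup Jlo) ^ m).trace ∈
      Subalgebra.center ℂ (UniversalEnvelopingAlgebra ℂ g) := by
  set U := UniversalEnvelopingAlgebra ℂ g
  set F := FMat ρ Jup Jlo with hFdef
  set u := (F ^ m).trace with hu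
  have hcomm : ∀ x : g, UniversalEnvelopingAlgebra.ι ℂ x * u
      = u * UniversalEnvelopingAlgebra.ι ℂ x := by
    intro x
    set D : Matrix (Fin N) (Fin N) U :=
      (UniversalEnvelopingAlgebra.ι ℂ x) • (1 : Matrix (Fin N) (Fin N) U) with hD
    set X : Matrix (Fin N) (Fin N) U := (ρ x).map (algebraMap ℂ U) with hX
    have hkey : D * F - F * D = F * X - X * F :=
      aux_key_U B hBinv Jup Jlo hdual ρ x
    have hpow := aux_comm_pow D F X hkey m
    have htr := congrArg Matrix.trace hpow
    rw [Matrix.trace_sub, Matrix.trace_sub, hD,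
      aux_trace_smul_one_mul, aux_trace_mul_smul_one, hX,
      aux_trace_comm_central (F ^ m) (ρ x), sub_self] at htr
    have := sub_eq_zero.mp htr
    rw [← hu] at this
    exact this
  have hgen : Algebra.adjoin ℂ (Set.range (UniversalEnvelopingAlgebra.ι ℂ : g → U)) = ⊤ :=
    aux_adjoin_range_ι_eq_top ℂ g
  have hsub : Set.range (UniversalEnvelopingAlgebra.ι ℂ : g → U)
      ⊆ (Subalgebra.centralizer ℂ ({u} : Set U) : Subalgebra ℂ U) := by
    rintro y ⟨x, rfl⟩
    rw [SetLike.mem_coe, Subalgebra.mem_centralizer_iff]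
    rintro z hz
    rw [Set.mem_singleton_iff] at hz
    subst hz
    exact (hcomm x).symm
  have htop : (⊤ : Subalgebra ℂ U) ≤ Subalgebra.centralizer ℂ ({u} : Set U) := by
    rw [← hgen]
    exact Algebra.adjoin_le hsub
  rw [Subalgebra.mem_center_iff]
  intro b
  have hb : b ∈ Subalgebra.centralizer ℂ ({u} : Set U) := htop (by trivial)
  rw [Subalgebra.mem_centralizer_iff] at hb
  exact (hb u rfl).symm
end

section
/- For all 1 ≤ i,j ≤ N and all m ≥ 1, the commutator [ι(F^{(0)}_{ij}), tr F(u)ᵐ] is zero in U(𝔤_ℓ)[u]; that is, tr F(u)ᵐ commutes with every element of the degree-zero copy of 𝔤 inside U(𝔤_ℓ). (Intermediate claim in the proof of Proposition 3.1.) -/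
set_option maxHeartbeats 1000000
set_option synthInstance.maxHeartbeats 400000


/- Context: 𝔤 finite-dimensional simple over ℂ, B nondegenerate symmetric invariant form,
dual bases Jup = (Jᵃ), Jlo = (J_a), ρ faithful on ℂᴺ, f_{ij} = −∑ₐ (ρ(Jᵃ))_{ij}·J_a;
𝔤_ℓ = 𝔤 ⊗ ℂ[v]/(v^{ℓ+1}) the Takiff algebra, F^{(r)}_{ij} = f_{ij} ⊗ vʳ,
F(u) the N×N matrix over U(𝔤_ℓ)[u] with entries ∑_{r=0}^ℓ ι(F^{(r)}_{ij})uʳ,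
tr F(u)ᵐ = ∑_r θ_m^{(r)} uʳ. -/

open TensorProduct

attribute [local instance 100] LieRing.ofAssociativeRing

/-- The truncated polynomial ring `ℂ[v]/(v^{ℓ+1})`. -/
abbrev TruncPoly (ℓ : ℕ) : Type :=
  Polynomial ℂ ⧸ Ideal.span {(Polynomial.X : Polynomial ℂ) ^ (ℓ + 1)}

/-- The image of `vʳ` in `ℂ[v]/(v^{ℓ+1})`. -/
noncomputable def vpow (ℓ r : ℕ) : TruncPoly ℓ :=
  Ideal.Quotient.mk _ (Polynomial.X ^ r)

/-- A base-changed Lie algebra is also a Lie algebra over the base field. -/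
noncomputable instance instLieAlgebraCBaseChange {g : Type} [LieRing g] [LieAlgebra ℂ g]
    {A : Type} [CommRing A] [Algebra ℂ A] : LieAlgebra ℂ (A ⊗[ℂ] g) where
  lie_smul t x y := by
    rw [← algebraMap_smul A t y, ← algebraMap_smul A t ⁅x, y⁆]
    exact (LieAlgebra.ExtendScalars.instLieAlgebra ℂ A g).lie_smul _ x y

/-- The element `F^{(r)}_{ij} = f_{ij} ⊗ vʳ` of the Takiff algebra `𝔤_ℓ`. -/
noncomputable def takiffF {d N : ℕ} {g : Type} [LieRing g] [LieAlgebra ℂ g]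
    (ρ : g →ₗ⁅ℂ⁆ Matrix (Fin N) (Fin N) ℂ) (Jup Jlo : Module.Basis (Fin d) ℂ g)
    (ℓ r : ℕ) (i j : Fin N) : TruncPoly ℓ ⊗[ℂ] g :=
  vpow ℓ r ⊗ₜ fElem ρ Jup Jlo i j

/-- The matrix `F(u)` over `U(𝔤_ℓ)[u]` with entries `∑_{r=0}^ℓ ι(F^{(r)}_{ij})·uʳ`. -/
noncomputable def takiffFMat {d N : ℕ} {g : Type} [LieRing g] [LieAlgebra ℂ g]
    (ρ : g →ₗ⁅ℂ⁆ Matrix (Fin N) (Fin N) ℂ) (Jup Jlo : Module.Basis (Fin d) ℂ g) (ℓ : ℕ) :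
    Matrix (Fin N) (Fin N)
      (Polynomial (UniversalEnvelopingAlgebra ℂ (TruncPoly ℓ ⊗[ℂ] g))) :=
  Matrix.of fun i j => ∑ r : Fin (ℓ + 1),
    Polynomial.C (UniversalEnvelopingAlgebra.ι ℂ (takiffF ρ Jup Jlo ℓ (r : ℕ) i j)) *
      Polynomial.X ^ (r : ℕ)



/-! ### Auxiliary lemmas -/

section auxLemmas

variable {d N : ℕ} {g : Type} [LieRing g] [LieAlgebra ℂ g]

lemma dual_expand_lo (B : g →ₗ[ℂ] g →ₗ[ℂ] ℂ) (Jup Jlo : Module.Basis (Fin d) ℂ g)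
    (hdual : ∀ a b, B (Jlo a) (Jup b) = if a = b then 1 else 0)
    (y : g) : y = ∑ b, B y (Jup b) • Jlo b := by
  have key : ∀ b, B y (Jup b) = Jlo.repr y b := by
    intro b
    conv_lhs => rw [← Jlo.sum_repr y]
    simp [-Module.Basis.sum_repr, map_sum, LinearMap.sum_apply, hdual, Finset.sum_ite_eq']
  simp only [key]
  exact (Jlo.sum_repr y).symm

lemma dual_expand_up (B : g →ₗ[ℂ] g →ₗ[ℂ] ℂ) (Jup Jlo : Module.Basis (Fin d) ℂ g)
    (hdual : ∀ a b, B (Jlo a) (Jup b) = if a = b then 1 else 0)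
    (y : g) : y = ∑ a, B (Jlo a) y • Jup a := by
  have key : ∀ a, B (Jlo a) y = Jup.repr y a := by
    intro a
    conv_lhs => rw [← Jup.sum_repr y]
    simp [-Module.Basis.sum_repr, map_sum, hdual, Finset.sum_ite_eq]
  simp only [key]
  exact (Jup.sum_repr y).symm

lemma lie_fElem (B : g →ₗ[ℂ] g →ₗ[ℂ] ℂ)
    (hBsymm : ∀ x y, B x y = B y x)
    (hBinv : ∀ x y z, B ⁅x, y⁆ z = B x ⁅y, z⁆)
    (Jup Jlo : Module.Basis (Fin d) ℂ g)
    (hdual : ∀ a b, B (Jlo a) (Jup b) = if a = b then 1 else 0)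
    (ρ : g →ₗ⁅ℂ⁆ Matrix (Fin N) (Fin N) ℂ)
    (x : g) (k l : Fin N) :
    ⁅x, fElem ρ Jup Jlo k l⁆ =
      ∑ p, (ρ x) p l • fElem ρ Jup Jlo k p - ∑ p, (ρ x) k p • fElem ρ Jup Jlo p l := by
  have hbr : ∀ a, ⁅x, Jlo a⁆ = -∑ b, B (Jlo a) ⁅x, Jup b⁆ • Jlo b := by
    intro a
    have hco : ∀ b, B ⁅x, Jlo a⁆ (Jup b) = -(B (Jlo a) ⁅x, Jup b⁆) := by
      intro b
      rw [hBinv, ← lie_skew, map_neg, ← hBinv, hBsymm]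
    rw [dual_expand_lo B Jup Jlo hdual ⁅x, Jlo a⁆]
    simp [hco, neg_smul, Finset.sum_neg_distrib]
  have hrho : ∀ w : g, ∑ a, B (Jlo a) w * (ρ (Jup a)) k l = (ρ w) k l := by
    intro w
    conv_rhs => rw [dual_expand_up B Jup Jlo hdual w]
    rw [← LieHom.coe_toLinearMap, map_sum]
    simp [Matrix.sum_apply, smul_eq_mul]
  have hsum : ∀ (f : Fin d → g), ⁅x, ∑ a, f a⁆ = ∑ a, ⁅x, f a⁆ := by
    intro f
    induction (Finset.univ : Finset (Fin d)) using Finset.cons_induction with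
    | empty => simp
    | cons a s ha ih => simp [Finset.sum_insert ha, ih]
  have step1 : ⁅x, fElem ρ Jup Jlo k l⁆ = ∑ b, ((ρ ⁅x, Jup b⁆) k l) • Jlo b := by
    unfold fElem
    rw [lie_neg, hsum]
    simp only [lie_smul, hbr, smul_neg, Finset.smul_sum, smul_smul, Finset.sum_neg_distrib,
      neg_neg]
    rw [Finset.sum_comm]
    refine Finset.sum_congr rfl fun b _ => ?_
    rw [← Finset.sum_smul]
    congr 1
    rw [← hrho ⁅x, Jup b⁆]
    exact Finset.sum_congr rfl fun a _ => mul_comm _ _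
  rw [step1]
  simp only [LieHom.map_lie, Ring.lie_def, Matrix.sub_apply, Matrix.mul_apply, sub_smul,
    Finset.sum_smul, Finset.sum_sub_distrib]
  unfold fElem
  simp only [smul_neg, Finset.smul_sum, smul_smul, Finset.sum_neg_distrib, neg_sub_neg]
  congr 1
  · rw [Finset.sum_comm]
  · rw [Finset.sum_comm]
    exact Finset.sum_congr rfl fun b _ => Finset.sum_congr rfl fun p _ => by rw [mul_comm]

lemma vpow_zero (ℓ : ℕ) : vpow ℓ 0 = 1 := by
  simp [vpow]

lemma lie_takiffF (B : g →ₗ[ℂ] g →ₗ[ℂ] ℂ)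
    (hBsymm : ∀ x y, B x y = B y x)
    (hBinv : ∀ x y z, B ⁅x, y⁆ z = B x ⁅y, z⁆)
    (Jup Jlo : Module.Basis (Fin d) ℂ g)
    (hdual : ∀ a b, B (Jlo a) (Jup b) = if a = b then 1 else 0)
    (ρ : g →ₗ⁅ℂ⁆ Matrix (Fin N) (Fin N) ℂ)
    (ℓ r : ℕ) (i j k l : Fin N) :
    ⁅takiffF ρ Jup Jlo ℓ 0 i j, takiffF ρ Jup Jlo ℓ r k l⁆ =
      ∑ p, (ρ (fElem ρ Jup Jlo i j)) p l • takiffF ρ Jup Jlo ℓ r k p -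
        ∑ p, (ρ (fElem ρ Jup Jlo i j)) k p • takiffF ρ Jup Jlo ℓ r p l := by
  unfold takiffF
  rw [LieAlgebra.ExtendScalars.bracket_tmul, vpow_zero, one_mul,
    lie_fElem B hBsymm hBinv Jup Jlo hdual ρ _ k l]
  rw [TensorProduct.tmul_sub, TensorProduct.tmul_sum, TensorProduct.tmul_sum]
  simp [TensorProduct.tmul_smul]

end auxLemmas

section polyAux

variable {d N : ℕ} {g : Type} [LieRing g] [LieAlgebra ℂ g]
  (ρ : g →ₗ⁅ℂ⁆ Matrix (Fin N) (Fin N) ℂ) (Jup Jlo : Module.Basis (Fin d) ℂ g) (ℓ : ℕ)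

local notation "UEA" => UniversalEnvelopingAlgebra ℂ (TruncPoly ℓ ⊗[ℂ] g)

lemma poly_lie_sum {R : Type*} [Ring R] {α : Type*} (s : Finset α) (c : R) (f : α → R) :
    ⁅c, ∑ a ∈ s, f a⁆ = ∑ a ∈ s, ⁅c, f a⁆ := by
  simp [Ring.lie_def, Finset.mul_sum, Finset.sum_mul, Finset.sum_sub_distrib]

lemma poly_lie_CX (a b : UEA) (r : ℕ) :
    ⁅(Polynomial.C a : Polynomial UEA), Polynomial.C b * Polynomial.X ^ r⁆ =
      Polynomial.C ⁅a, b⁆ * Polynomial.X ^ r := by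
  simp only [Ring.lie_def]
  rw [map_sub, map_mul, map_mul, sub_mul]
  congr 1
  · rw [← mul_assoc]
  · rw [mul_assoc, Polynomial.X_pow_mul, ← mul_assoc]

lemma takiffFMat_apply (k l : Fin N) :
    takiffFMat ρ Jup Jlo ℓ k l = ∑ r : Fin (ℓ + 1),
      Polynomial.C (UniversalEnvelopingAlgebra.ι ℂ (takiffF ρ Jup Jlo ℓ (r : ℕ) k l)) *
        Polynomial.X ^ (r : ℕ) := rfl

lemma key1
    (B : g →ₗ[ℂ] g →ₗ[ℂ] ℂ)
    (hBsymm : ∀ x y, B x y = B y x)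
    (hBinv : ∀ x y z, B ⁅x, y⁆ z = B x ⁅y, z⁆)
    (hdual : ∀ a b, B (Jlo a) (Jup b) = if a = b then 1 else 0)
    (i j k l : Fin N) :
    ⁅(Polynomial.C (UniversalEnvelopingAlgebra.ι ℂ (takiffF ρ Jup Jlo ℓ 0 i j)) :
        Polynomial UEA), takiffFMat ρ Jup Jlo ℓ k l⁆ =
      ∑ p, (ρ (fElem ρ Jup Jlo i j)) p l • takiffFMat ρ Jup Jlo ℓ k p -
        ∑ p, (ρ (fElem ρ Jup Jlo i j)) k p • takiffFMat ρ Jup Jlo ℓ p l := by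
  simp only [takiffFMat_apply]
  rw [poly_lie_sum]
  have hterm : ∀ r : Fin (ℓ + 1),
      ⁅(Polynomial.C (UniversalEnvelopingAlgebra.ι ℂ (takiffF ρ Jup Jlo ℓ 0 i j)) :
          Polynomial UEA),
        Polynomial.C (UniversalEnvelopingAlgebra.ι ℂ (takiffF ρ Jup Jlo ℓ (r : ℕ) k l)) *
          Polynomial.X ^ (r : ℕ)⁆ =
      ∑ p, (ρ (fElem ρ Jup Jlo i j)) p l •
          (Polynomial.C (UniversalEnvelopingAlgebra.ι ℂ (takiffF ρ Jup Jlo ℓ (r : ℕ) k p)) *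
            Polynomial.X ^ (r : ℕ)) -
        ∑ p, (ρ (fElem ρ Jup Jlo i j)) k p •
          (Polynomial.C (UniversalEnvelopingAlgebra.ι ℂ (takiffF ρ Jup Jlo ℓ (r : ℕ) p l)) *
            Polynomial.X ^ (r : ℕ)) := by
    intro r
    rw [poly_lie_CX, ← LieHom.map_lie,
      lie_takiffF B hBsymm hBinv Jup Jlo hdual ρ ℓ (r : ℕ) i j k l]
    rw [← LieHom.coe_toLinearMap, map_sub, map_sum, map_sum]
    simp only [map_smul, LieHom.coe_toLinearMap]
    rw [map_sub, map_sum, map_sum, sub_mul]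
    simp only [← Polynomial.smul_C, Finset.sum_mul, smul_mul_assoc]
  rw [Finset.sum_congr rfl fun r _ => hterm r]
  rw [Finset.sum_sub_distrib]
  simp only [Finset.smul_sum]
  congr 1
  · rw [Finset.sum_comm]
  · rw [Finset.sum_comm]

end polyAux

/-- for `m ≥ 1`, the commutator `[ι(F^{(0)}_{ij}), tr F(u)ᵐ]` vanishes in
`U(𝔤_ℓ)[u]`. -/
theorem takiff_commutator_degree_zero
    {d N : ℕ} {g : Type} [LieRing g] [LieAlgebra ℂ g]
    [FiniteDimensional ℂ g] [LieAlgebra.IsSimple ℂ g]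
    (B : g →ₗ[ℂ] g →ₗ[ℂ] ℂ)
    (hBsymm : ∀ x y, B x y = B y x)
    (hBinv : ∀ x y z, B ⁅x, y⁆ z = B x ⁅y, z⁆)
    (hBnondeg : ∀ x, (∀ y, B x y = 0) → x = 0)
    (Jup Jlo : Module.Basis (Fin d) ℂ g)
    (hdual : ∀ a b, B (Jlo a) (Jup b) = if a = b then 1 else 0)
    (ρ : g →ₗ⁅ℂ⁆ Matrix (Fin N) (Fin N) ℂ)
    (hρ : Function.Injective ρ)
    (ℓ : ℕ) (hℓ : 1 ≤ ℓ)
    (i j : Fin N) (m : ℕ) (hm : 1 ≤ m) :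
    ⁅(Polynomial.C (UniversalEnvelopingAlgebra.ι ℂ (takiffF ρ Jup Jlo ℓ 0 i j)) :
        Polynomial (UniversalEnvelopingAlgebra ℂ (TruncPoly ℓ ⊗[ℂ] g))),
      (((takiffFMat ρ Jup Jlo ℓ) ^ m).trace)⁆ = 0 := by
    classical
  set A : Matrix (Fin N) (Fin N) ℂ := ρ (fElem ρ Jup Jlo i j) with hA
  set M : Matrix (Fin N) (Fin N)
      (Polynomial (UniversalEnvelopingAlgebra ℂ (TruncPoly ℓ ⊗[ℂ] g))) :=
    takiffFMat ρ Jup Jlo ℓ with hM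
  set c : Polynomial (UniversalEnvelopingAlgebra ℂ (TruncPoly ℓ ⊗[ℂ] g)) :=
    Polynomial.C (UniversalEnvelopingAlgebra.ι ℂ (takiffF ρ Jup Jlo ℓ 0 i j)) with hc
  have hleib : ∀ a b : Polynomial (UniversalEnvelopingAlgebra ℂ (TruncPoly ℓ ⊗[ℂ] g)),
      ⁅c, a * b⁆ = ⁅c, a⁆ * b + a * ⁅c, b⁆ := by
    intro a b; simp only [Ring.lie_def]; noncomm_ring
  have keym : ∀ (n : ℕ) (k l : Fin N),
      ⁅c, (M ^ n) k l⁆ = ∑ p, A p l • (M ^ n) k p - ∑ p, A k p • (M ^ n) p l := by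
    intro n
    induction n with
    | zero =>
      intro k l
      simp only [pow_zero, Matrix.one_apply]
      by_cases h : k = l <;>
        simp [h, Ring.lie_def, Finset.sum_ite_eq, Finset.sum_ite_eq']
    | succ n ih =>
      intro k l
      have hpow : ∀ a b : Fin N, (M ^ (n + 1)) a b = ∑ q, (M ^ n) a q * M q b := by
        intro a b; simp only [pow_succ, Matrix.mul_apply]
      rw [hpow]
      rw [poly_lie_sum]
      have hterm : ∀ q, ⁅c, (M ^ n) k q * M q l⁆ =
          ((∑ p, A p q • (M ^ n) k p - ∑ p, A k p • (M ^ n) p q) * M q l +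
            (M ^ n) k q * (∑ p, A p l • M q p - ∑ p, A q p • M p l)) := by
        intro q
        rw [hleib, ih, key1 ρ Jup Jlo ℓ B hBsymm hBinv hdual i j q l]
      rw [Finset.sum_congr rfl fun q _ => hterm q]
      simp only [sub_mul, mul_sub, Finset.sum_mul, Finset.mul_sum, smul_mul_assoc,
        mul_smul_comm, Finset.sum_sub_distrib, Finset.sum_add_distrib]
      have e14 : (∑ q, ∑ p, A p q • ((M ^ n) k p * M q l)) =
          ∑ q, ∑ p, A q p • ((M ^ n) k q * M p l) := by
        rw [Finset.sum_comm]
      have e3 : (∑ p, A p l • ((M ^ (n+1)) k p)) =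
          ∑ q, ∑ p, A p l • ((M ^ n) k q * M q p) := by
        simp only [hpow, Finset.smul_sum]
        rw [Finset.sum_comm]
      have e2 : (∑ p, A k p • ((M ^ (n+1)) p l)) =
          ∑ q, ∑ p, A k p • ((M ^ n) p q * M q l) := by
        simp only [hpow, Finset.smul_sum]
        rw [Finset.sum_comm]
      rw [e3, e2, e14]
      abel
  rw [Matrix.trace]
  rw [poly_lie_sum]
  have : ∀ k, ⁅c, ((M ^ m).diag k)⁆ =
      ∑ p, A p k • (M ^ m) k p - ∑ p, A k p • (M ^ m) p k := fun k => keym m k k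
  rw [Finset.sum_congr rfl fun k _ => this k]
  rw [Finset.sum_sub_distrib, sub_eq_zero]
  rw [Finset.sum_comm]
end

section
/- For all 1 ≤ i,j ≤ N and all m ≥ 1, the polynomial [ι(F^{(1)}_{ij}), tr F(u)ᵐ] ∈ U(𝔤_ℓ)[u] has degree strictly less than mℓ − ℓ; that is, the coefficient of uʳ in this commutator vanishes for every r ≥ mℓ − ℓ. (Intermediate claim in the proof of Proposition 3.1.) -/
/- Context: 𝔤 finite-dimensional simple over ℂ, B nondegenerate symmetric invariant form,
dual bases Jup = (Jᵃ), Jlo = (J_a), ρ faithful on ℂᴺ, f_{ij} = −∑ₐ (ρ(Jᵃ))_{ij}·J_a;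
𝔤_ℓ = 𝔤 ⊗ ℂ[v]/(v^{ℓ+1}) the Takiff algebra, F^{(r)}_{ij} = f_{ij} ⊗ vʳ,
F(u) the N×N matrix over U(𝔤_ℓ)[u] with entries ∑_{r=0}^ℓ ι(F^{(r)}_{ij})uʳ,
tr F(u)ᵐ = ∑_r θ_m^{(r)} uʳ. -/

open TensorProduct

attribute [local instance 100] LieRing.ofAssociativeRing

section MatrixComm
variable {R : Type} [Ring R] {n : ℕ}

lemma aux_matrix_comm (F Δ M' : Matrix (Fin n) (Fin n) R)
    (T X : R) (hX : ∀ y : R, X * y = y * X)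
    (hM : ∀ k l (y : R), M' k l * y = y * M' k l)
    (hK1 : ∀ k l, (T * F k l - F k l * T) * X = ((F - Δ) * M' - M' * (F - Δ)) k l)
    (m : ℕ) :
    (T * (F ^ m).trace - (F ^ m).trace * T) * X
      = -∑ k ∈ Finset.range m, (F ^ k * (Δ * M' - M' * Δ) * F ^ (m - 1 - k)).trace := by
  classical
  set Tm : Matrix (Fin n) (Fin n) R := Matrix.diagonal (fun _ => T) with hTm
  set Xm : Matrix (Fin n) (Fin n) R := Matrix.diagonal (fun _ => X) with hXm
  have hXc : ∀ A : Matrix (Fin n) (Fin n) R, A * Xm = Xm * A := by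
    intro A; ext k l
    simp [hXm, Matrix.mul_diagonal, Matrix.diagonal_mul, hX]
  have hD : ∀ q : ℕ, Tm * F ^ q - F ^ q * Tm
      = ∑ k ∈ Finset.range q, F ^ k * (Tm * F - F * Tm) * F ^ (q - 1 - k) := by
    intro q
    induction q with
    | zero => simp
    | succ q ih =>
      have step : Tm * F ^ (q+1) - F ^ (q+1) * Tm
          = (Tm * F ^ q - F ^ q * Tm) * F + F ^ q * (Tm * F - F * Tm) := by
        rw [pow_succ]; noncomm_ring
      rw [step, ih, Finset.sum_mul, Finset.sum_range_succ]
      congr 1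
      · refine Finset.sum_congr rfl fun k hk => ?_
        have hk' : k < q := Finset.mem_range.mp hk
        have h1 : q - 1 - k + 1 = q + 1 - 1 - k := by omega
        rw [mul_assoc, ← pow_succ, h1]
      · have h0 : q + 1 - 1 - q = 0 := by omega
        rw [h0, pow_zero, mul_one]
  have hDX : (Tm * F - F * Tm) * Xm = (F - Δ) * M' - M' * (F - Δ) := by
    ext k l
    rw [Matrix.mul_diagonal]
    have h2 : (Tm * F - F * Tm) k l = T * F k l - F k l * T := by
      simp [hTm, Matrix.sub_apply, Matrix.diagonal_mul, Matrix.mul_diagonal]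
    rw [h2, hK1]
  have hmain : (Tm * F ^ m - F ^ m * Tm) * Xm
      = ∑ k ∈ Finset.range m, F ^ k * ((F - Δ) * M' - M' * (F - Δ)) * F ^ (m - 1 - k) := by
    rw [hD m, Finset.sum_mul]
    refine Finset.sum_congr rfl fun k _ => ?_
    rw [mul_assoc, hXc (F ^ (m - 1 - k)), ← mul_assoc, mul_assoc (F ^ k), hDX]
  have hsplit : ∀ k : ℕ, F ^ k * ((F - Δ) * M' - M' * (F - Δ)) * F ^ (m - 1 - k)
      = F ^ k * (F * M' - M' * F) * F ^ (m - 1 - k)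
        - F ^ k * (Δ * M' - M' * Δ) * F ^ (m - 1 - k) := by
    intro k; noncomm_ring
  have htraceL : ((Tm * F ^ m - F ^ m * Tm) * Xm).trace
      = (T * (F ^ m).trace - (F ^ m).trace * T) * X := by
    simp [hTm, hXm, Matrix.trace, Matrix.diag, Matrix.mul_diagonal, Matrix.sub_apply,
      Matrix.diagonal_mul, Finset.sum_sub_distrib, Finset.sum_mul, Finset.mul_sum, sub_mul,
      mul_assoc]
  have htrcomm : (F ^ m * M').trace = (M' * F ^ m).trace := by
    rw [Matrix.trace, Matrix.trace]
    simp only [Matrix.diag_apply, Matrix.mul_apply]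
    rw [Finset.sum_comm]
    exact Finset.sum_congr rfl fun i _ => Finset.sum_congr rfl fun p _ => (hM i p _).symm
  have htel : ∑ k ∈ Finset.range m, (F ^ k * (F * M' - M' * F) * F ^ (m - 1 - k)).trace = 0 := by
    have hterm : ∀ k ∈ Finset.range m, (F ^ k * (F * M' - M' * F) * F ^ (m - 1 - k)).trace
        = (F ^ (k+1) * M' * F ^ (m - (k+1))).trace - (F ^ k * M' * F ^ (m - k)).trace := by
      intro k hk
      have hk' : k < m := Finset.mem_range.mp hk
      have e1 : F ^ k * (F * M' - M' * F) * F ^ (m - 1 - k)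
          = F ^ (k+1) * M' * F ^ (m - (k+1)) - F ^ k * M' * F ^ (m - k) := by
        have h2 : m - (k+1) = m - 1 - k := by omega
        have h3 : m - k = (m - 1 - k) + 1 := by omega
        rw [h2, h3, pow_succ, pow_succ']
        noncomm_ring
      rw [e1, Matrix.trace_sub]
    rw [Finset.sum_congr rfl hterm,
      Finset.sum_range_sub (fun k => (F ^ k * M' * F ^ (m - k)).trace)]
    simp only [Nat.sub_self, pow_zero, mul_one, Nat.sub_zero, one_mul]
    rw [htrcomm, sub_self]
  calc (T * (F ^ m).trace - (F ^ m).trace * T) * X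
      = ((Tm * F ^ m - F ^ m * Tm) * Xm).trace := htraceL.symm
    _ = ∑ k ∈ Finset.range m, (F ^ k * ((F - Δ) * M' - M' * (F - Δ)) * F ^ (m - 1 - k)).trace := by
        rw [hmain, Matrix.trace_sum]
    _ = -∑ k ∈ Finset.range m, (F ^ k * (Δ * M' - M' * Δ) * F ^ (m - 1 - k)).trace := by
        rw [Finset.sum_congr rfl fun k _ => by rw [hsplit k, Matrix.trace_sub],
          Finset.sum_sub_distrib, htel, zero_sub]

lemma aux_entry_deg_mul {S : Type} [Ring S] (A Bm : Matrix (Fin n) (Fin n) (Polynomial S))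
    (dA dB : ℕ) (hA : ∀ k l, (A k l).natDegree ≤ dA) (hB : ∀ k l, (Bm k l).natDegree ≤ dB) :
    ∀ k l, ((A * Bm) k l).natDegree ≤ dA + dB := by
  intro k l
  rw [Matrix.mul_apply]
  apply Polynomial.natDegree_sum_le_of_forall_le
  intro p _
  exact le_trans (Polynomial.natDegree_mul_le) (add_le_add (hA k p) (hB p l))

lemma aux_entry_deg_pow {S : Type} [Ring S] (F : Matrix (Fin n) (Fin n) (Polynomial S))
    (ℓ : ℕ) (hF : ∀ k l, (F k l).natDegree ≤ ℓ) :
    ∀ (q : ℕ) (k l : Fin n), ((F ^ q) k l).natDegree ≤ q * ℓ := by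
  intro q
  induction q with
  | zero =>
    intro k l
    rw [pow_zero]
    rcases eq_or_ne k l with h | h
    · simp [Matrix.one_apply, h]
    · simp [Matrix.one_apply, h]
  | succ q ih =>
    intro k l
    rw [pow_succ]
    have := aux_entry_deg_mul (F ^ q) F (q * ℓ) ℓ ih hF k l
    calc ((F ^ q * F) k l).natDegree ≤ q * ℓ + ℓ := this
      _ = (q + 1) * ℓ := by ring

end MatrixComm

open Polynomial

section Bridge
variable {d N : ℕ} {g : Type} [LieRing g] [LieAlgebra ℂ g]
  (B : g →ₗ[ℂ] g →ₗ[ℂ] ℂ)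
  (Jup Jlo : Module.Basis (Fin d) ℂ g)
  (ρ : g →ₗ⁅ℂ⁆ Matrix (Fin N) (Fin N) ℂ)

lemma aux_vpow_mul (ℓ a b : ℕ) : vpow ℓ a * vpow ℓ b = vpow ℓ (a + b) := by
  rw [vpow, vpow, vpow, ← map_mul, ← pow_add]

lemma aux_vpow_zero {ℓ s : ℕ} (h : ℓ + 1 ≤ s) : vpow ℓ s = 0 := by
  rw [vpow, Ideal.Quotient.eq_zero_iff_mem]
  exact Ideal.mem_span_singleton.mpr (pow_dvd_pow _ h)

lemma aux_takiffF_zero {ℓ s : ℕ} (h : ℓ + 1 ≤ s) (k l : Fin N) :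
    takiffF ρ Jup Jlo ℓ s k l = 0 := by
  rw [takiffF, aux_vpow_zero h, TensorProduct.zero_tmul]

lemma aux_lemA (hBsymm : ∀ x y, B x y = B y x)
    (hBinv : ∀ x y z, B ⁅x, y⁆ z = B x ⁅y, z⁆)
    (hdual : ∀ a b, B (Jlo a) (Jup b) = if a = b then 1 else 0)
    (i j : Fin N) (y : g) :
    ⁅fElem ρ Jup Jlo i j, y⁆ =
      (∑ p, ρ y i p • fElem ρ Jup Jlo p j) - ∑ p, ρ y p j • fElem ρ Jup Jlo i p := by
  classical
  have expand_lo : ∀ x : g, ∑ c, B x (Jup c) • Jlo c = x := by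
    intro x
    conv_rhs => rw [← Module.Basis.sum_repr Jlo x]
    refine Finset.sum_congr rfl fun c _ => ?_
    congr 1
    conv_lhs => rw [← Module.Basis.sum_repr Jlo x]
    simp only [map_sum, LinearMap.map_smul, LinearMap.sum_apply, LinearMap.smul_apply]
    simp [hdual, smul_eq_mul]
  have expand_up : ∀ x : g, ∑ c, B x (Jlo c) • Jup c = x := by
    intro x
    conv_rhs => rw [← Module.Basis.sum_repr Jup x]
    refine Finset.sum_congr rfl fun c _ => ?_
    congr 1
    conv_lhs => rw [← Module.Basis.sum_repr Jup x]
    simp only [map_sum, LinearMap.map_smul, LinearMap.sum_apply, LinearMap.smul_apply]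
    have : ∀ a, B (Jup a) (Jlo c) = if a = c then 1 else 0 := by
      intro a; rw [hBsymm, hdual]; simp [eq_comm]
    simp [this, smul_eq_mul]
  have key : ∀ (z : g) (i j : Fin N), ∑ a, B (Jlo a) z * ρ (Jup a) i j = ρ z i j := by
    intro z i j
    conv_rhs => rw [← expand_up z]
    have hmap : ρ (∑ c, B z (Jlo c) • Jup c) = ∑ c, B z (Jlo c) • ρ (Jup c) := by
      rw [← LieHom.coe_toLinearMap, map_sum]
      simp
    rw [hmap, Matrix.sum_apply]
    refine Finset.sum_congr rfl fun a _ => ?_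
    rw [Matrix.smul_apply, smul_eq_mul, hBsymm]
  have sum_lie' : ∀ (f : Fin d → g) (y : g),
      ⁅∑ a, f a, y⁆ = ∑ a, ⁅f a, y⁆ := by
    intro f y
    induction (Finset.univ : Finset (Fin d)) using Finset.induction with
    | empty => simp
    | insert _ _ h ih => simp [Finset.sum_insert h, add_lie, ih]
  have rep : ∀ c, ρ ⁅y, Jup c⁆ i j
      = ∑ p, ρ y i p * ρ (Jup c) p j - ∑ p, ρ (Jup c) i p * ρ y p j := by
    intro c
    rw [LieHom.map_lie, Ring.lie_def, Matrix.sub_apply, Matrix.mul_apply, Matrix.mul_apply]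
  have hbr : ∀ a, ⁅Jlo a, y⁆ = ∑ c, B (Jlo a) ⁅y, Jup c⁆ • Jlo c := by
    intro a
    conv_lhs => rw [← expand_lo ⁅Jlo a, y⁆]
    exact Finset.sum_congr rfl fun c _ => by rw [hBinv]
  have hL : ⁅fElem ρ Jup Jlo i j, y⁆
      = -∑ a, ρ (Jup a) i j • ∑ c, B (Jlo a) ⁅y, Jup c⁆ • Jlo c := by
    rw [fElem, neg_lie, sum_lie']
    congr 1
    refine Finset.sum_congr rfl fun a _ => ?_
    rw [smul_lie, hbr a]
  rw [hL]
  apply Jlo.repr.injective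
  ext b
  simp only [fElem, map_neg, map_sum, map_smul, map_sub, Module.Basis.repr_self,
    Finsupp.smul_single, smul_eq_mul, mul_one, smul_neg,
    Finsupp.coe_finset_sum, Finset.sum_apply, Finsupp.coe_neg, Pi.neg_apply,
    Finsupp.coe_sub, Pi.sub_apply, Finsupp.smul_apply, Finset.sum_apply',
    Finsupp.single_apply, Finset.sum_ite_eq', Finset.mem_univ, if_true]
  -- now a scalar identity
  have key' : ∑ a, ρ (Jup a) i j * B (Jlo a) ⁅y, Jup b⁆ = ρ ⁅y, Jup b⁆ i j := by
    rw [← key ⁅y, Jup b⁆ i j]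
    exact Finset.sum_congr rfl fun a _ => mul_comm _ _
  rw [key', rep b, neg_sub, Finset.sum_neg_distrib, Finset.sum_neg_distrib,
    sub_neg_eq_add, sub_eq_neg_add]
  congr 1
  exact Finset.sum_congr rfl fun p _ => mul_comm _ _


lemma aux_takiff_bracket (hBsymm : ∀ x y, B x y = B y x)
    (hBinv : ∀ x y z, B ⁅x, y⁆ z = B x ⁅y, z⁆)
    (hdual : ∀ a b, B (Jlo a) (Jup b) = if a = b then 1 else 0)
    (ℓ s : ℕ) (i j k l : Fin N) :
    ⁅takiffF ρ Jup Jlo ℓ 1 i j, takiffF ρ Jup Jlo ℓ s k l⁆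
      = (∑ p, ρ (fElem ρ Jup Jlo i j) p l • takiffF ρ Jup Jlo ℓ (s+1) k p)
        - ∑ p, ρ (fElem ρ Jup Jlo i j) k p • takiffF ρ Jup Jlo ℓ (s+1) p l := by
  have h1 : ⁅fElem ρ Jup Jlo i j, fElem ρ Jup Jlo k l⁆
      = (∑ p, ρ (fElem ρ Jup Jlo i j) p l • fElem ρ Jup Jlo k p)
        - ∑ p, ρ (fElem ρ Jup Jlo i j) k p • fElem ρ Jup Jlo p l := by
    rw [← lie_skew, aux_lemA B Jup Jlo ρ hBsymm hBinv hdual k l (fElem ρ Jup Jlo i j), neg_sub]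
  rw [takiffF, takiffF, LieAlgebra.ExtendScalars.bracket_tmul, aux_vpow_mul,
    Nat.add_comm 1 s, h1, TensorProduct.tmul_sub]
  congr 1
  · rw [TensorProduct.tmul_sum]
    exact Finset.sum_congr rfl fun p _ => by rw [takiffF, TensorProduct.tmul_smul]
  · rw [TensorProduct.tmul_sum]
    exact Finset.sum_congr rfl fun p _ => by rw [takiffF, TensorProduct.tmul_smul]

lemma aux_shift (ℓ : ℕ) (k p : Fin N) :
    ∑ s ∈ Finset.range (ℓ+1),
        Polynomial.C (UniversalEnvelopingAlgebra.ι ℂ (takiffF ρ Jup Jlo ℓ (s+1) k p))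
          * Polynomial.X ^ (s+1)
      = takiffFMat ρ Jup Jlo ℓ k p
        - Polynomial.C (UniversalEnvelopingAlgebra.ι ℂ (takiffF ρ Jup Jlo ℓ 0 k p)) := by
  have hFkl : takiffFMat ρ Jup Jlo ℓ k p
      = ∑ s ∈ Finset.range (ℓ+1),
          Polynomial.C (UniversalEnvelopingAlgebra.ι ℂ (takiffF ρ Jup Jlo ℓ s k p))
            * Polynomial.X ^ s := by
    rw [takiffFMat, Matrix.of_apply]
    exact Fin.sum_univ_eq_sum_range
      (fun s => Polynomial.C (UniversalEnvelopingAlgebra.ι ℂ (takiffF ρ Jup Jlo ℓ s k p))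
        * Polynomial.X ^ s) (ℓ+1)
  rw [hFkl, Finset.sum_range_succ, Finset.sum_range_succ']
  rw [aux_takiffF_zero Jup Jlo ρ (le_refl (ℓ+1)) k p]
  simp

set_option maxHeartbeats 1000000 in
set_option synthInstance.maxHeartbeats 200000 in
lemma aux_hKey (hBsymm : ∀ x y, B x y = B y x)
    (hBinv : ∀ x y z, B ⁅x, y⁆ z = B x ⁅y, z⁆)
    (hdual : ∀ a b, B (Jlo a) (Jup b) = if a = b then 1 else 0)
    (ℓ : ℕ) (i j k l : Fin N) :
    (Polynomial.C (UniversalEnvelopingAlgebra.ι ℂ (takiffF ρ Jup Jlo ℓ 1 i j))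
        * takiffFMat ρ Jup Jlo ℓ k l
      - takiffFMat ρ Jup Jlo ℓ k l
        * Polynomial.C (UniversalEnvelopingAlgebra.ι ℂ (takiffF ρ Jup Jlo ℓ 1 i j)))
      * Polynomial.X
    = (∑ p, Polynomial.C (algebraMap ℂ (UniversalEnvelopingAlgebra ℂ (TruncPoly ℓ ⊗[ℂ] g))
            (ρ (fElem ρ Jup Jlo i j) p l))
          * (takiffFMat ρ Jup Jlo ℓ k p
              - Polynomial.C (UniversalEnvelopingAlgebra.ι ℂ (takiffF ρ Jup Jlo ℓ 0 k p))))
      - ∑ p, Polynomial.C (algebraMap ℂ (UniversalEnvelopingAlgebra ℂ (TruncPoly ℓ ⊗[ℂ] g))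
            (ρ (fElem ρ Jup Jlo i j) k p))
          * (takiffFMat ρ Jup Jlo ℓ p l
              - Polynomial.C (UniversalEnvelopingAlgebra.ι ℂ (takiffF ρ Jup Jlo ℓ 0 p l))) := by
  have hFkl : takiffFMat ρ Jup Jlo ℓ k l
      = ∑ s ∈ Finset.range (ℓ+1),
          Polynomial.C (UniversalEnvelopingAlgebra.ι ℂ (takiffF ρ Jup Jlo ℓ s k l))
            * Polynomial.X ^ s := by
    rw [takiffFMat, Matrix.of_apply]
    exact Fin.sum_univ_eq_sum_range
      (fun s => Polynomial.C (UniversalEnvelopingAlgebra.ι ℂ (takiffF ρ Jup Jlo ℓ s k l))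
        * Polynomial.X ^ s) (ℓ+1)
  have hA : (Polynomial.C (UniversalEnvelopingAlgebra.ι ℂ (takiffF ρ Jup Jlo ℓ 1 i j))
        * takiffFMat ρ Jup Jlo ℓ k l
      - takiffFMat ρ Jup Jlo ℓ k l
        * Polynomial.C (UniversalEnvelopingAlgebra.ι ℂ (takiffF ρ Jup Jlo ℓ 1 i j)))
      * Polynomial.X
      = ∑ s ∈ Finset.range (ℓ+1),
          Polynomial.C (UniversalEnvelopingAlgebra.ι ℂ
            ⁅takiffF ρ Jup Jlo ℓ 1 i j, takiffF ρ Jup Jlo ℓ s k l⁆)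
            * Polynomial.X ^ (s+1) := by
    rw [hFkl, Finset.mul_sum, Finset.sum_mul, ← Finset.sum_sub_distrib, Finset.sum_mul]
    refine Finset.sum_congr rfl fun s _ => ?_
    have hcomm : Polynomial.C (UniversalEnvelopingAlgebra.ι ℂ (takiffF ρ Jup Jlo ℓ 1 i j))
          * (Polynomial.C (UniversalEnvelopingAlgebra.ι ℂ (takiffF ρ Jup Jlo ℓ s k l))
              * Polynomial.X ^ s)
        - Polynomial.C (UniversalEnvelopingAlgebra.ι ℂ (takiffF ρ Jup Jlo ℓ s k l))
            * Polynomial.X ^ s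
          * Polynomial.C (UniversalEnvelopingAlgebra.ι ℂ (takiffF ρ Jup Jlo ℓ 1 i j))
        = Polynomial.C (UniversalEnvelopingAlgebra.ι ℂ (takiffF ρ Jup Jlo ℓ 1 i j)
            * UniversalEnvelopingAlgebra.ι ℂ (takiffF ρ Jup Jlo ℓ s k l)
            - UniversalEnvelopingAlgebra.ι ℂ (takiffF ρ Jup Jlo ℓ s k l)
            * UniversalEnvelopingAlgebra.ι ℂ (takiffF ρ Jup Jlo ℓ 1 i j)) * Polynomial.X ^ s := by
      rw [← mul_assoc, ← Polynomial.C_mul, mul_assoc, Polynomial.X_pow_mul, ← mul_assoc,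
        ← Polynomial.C_mul, ← sub_mul, ← map_sub]
    rw [hcomm, mul_assoc, ← pow_succ]
    congr 2
    rw [← Ring.lie_def]
    exact (LieHom.map_lie _ _ _).symm
  rw [hA]
  have hB : ∀ s : ℕ,
      Polynomial.C (UniversalEnvelopingAlgebra.ι ℂ
          ⁅takiffF ρ Jup Jlo ℓ 1 i j, takiffF ρ Jup Jlo ℓ s k l⁆)
      = (∑ p, Polynomial.C (algebraMap ℂ (UniversalEnvelopingAlgebra ℂ (TruncPoly ℓ ⊗[ℂ] g))
              (ρ (fElem ρ Jup Jlo i j) p l))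
            * Polynomial.C (UniversalEnvelopingAlgebra.ι ℂ (takiffF ρ Jup Jlo ℓ (s+1) k p)))
        - ∑ p, Polynomial.C (algebraMap ℂ (UniversalEnvelopingAlgebra ℂ (TruncPoly ℓ ⊗[ℂ] g))
              (ρ (fElem ρ Jup Jlo i j) k p))
            * Polynomial.C (UniversalEnvelopingAlgebra.ι ℂ (takiffF ρ Jup Jlo ℓ (s+1) p l)) := by
    intro s
    rw [aux_takiff_bracket B Jup Jlo ρ hBsymm hBinv hdual ℓ s i j k l,
      ← LieHom.coe_toLinearMap]
    simp only [map_sub, map_sum, map_smul, LieHom.coe_toLinearMap, Algebra.smul_def, map_mul]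
  rw [Finset.sum_congr rfl fun s _ => by rw [hB s]]
  simp only [sub_mul, Finset.sum_mul, mul_assoc]
  rw [Finset.sum_sub_distrib]
  congr 1
  · rw [Finset.sum_comm]
    refine Finset.sum_congr rfl fun p _ => ?_
    rw [← Finset.mul_sum, aux_shift Jup Jlo ρ ℓ k p]
  · rw [Finset.sum_comm]
    refine Finset.sum_congr rfl fun p _ => ?_
    rw [← Finset.mul_sum, aux_shift Jup Jlo ρ ℓ p l]

end Bridge

/-- for `m ≥ 1`, the polynomial `[ι(F^{(1)}_{ij}), tr F(u)ᵐ] ∈ U(𝔤_ℓ)[u]`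
has degree strictly less than `mℓ − ℓ`: its coefficient of `uʳ` vanishes whenever
`r ≥ mℓ − ℓ`. -/
theorem takiff_commutator_degree_one
    {d N : ℕ} {g : Type} [LieRing g] [LieAlgebra ℂ g]
    [FiniteDimensional ℂ g] [LieAlgebra.IsSimple ℂ g]
    (B : g →ₗ[ℂ] g →ₗ[ℂ] ℂ)
    (hBsymm : ∀ x y, B x y = B y x)
    (hBinv : ∀ x y z, B ⁅x, y⁆ z = B x ⁅y, z⁆)
    (hBnondeg : ∀ x, (∀ y, B x y = 0) → x = 0)
    (Jup Jlo : Module.Basis (Fin d) ℂ g)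
    (hdual : ∀ a b, B (Jlo a) (Jup b) = if a = b then 1 else 0)
    (ρ : g →ₗ⁅ℂ⁆ Matrix (Fin N) (Fin N) ℂ)
    (hρ : Function.Injective ρ)
    (ℓ : ℕ) (hℓ : 1 ≤ ℓ)
    (i j : Fin N) (m : ℕ) (hm : 1 ≤ m)
    (r : ℕ) (hr : m * ℓ - ℓ ≤ r) :
    (⁅(Polynomial.C (UniversalEnvelopingAlgebra.ι ℂ (takiffF ρ Jup Jlo ℓ 1 i j)) :
        Polynomial (UniversalEnvelopingAlgebra ℂ (TruncPoly ℓ ⊗[ℂ] g))),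
      (((takiffFMat ρ Jup Jlo ℓ) ^ m).trace)⁆).coeff r = 0 := by
  classical
  set F := takiffFMat ρ Jup Jlo ℓ with hF
  set T : Polynomial (UniversalEnvelopingAlgebra ℂ (TruncPoly ℓ ⊗[ℂ] g)) :=
    Polynomial.C (UniversalEnvelopingAlgebra.ι ℂ (takiffF ρ Jup Jlo ℓ 1 i j)) with hT
  set Δm : Matrix (Fin N) (Fin N) (Polynomial (UniversalEnvelopingAlgebra ℂ (TruncPoly ℓ ⊗[ℂ] g))) :=
    Matrix.of fun k l => Polynomial.C (UniversalEnvelopingAlgebra.ι ℂ (takiffF ρ Jup Jlo ℓ 0 k l)) with hΔm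
  set Ml : Matrix (Fin N) (Fin N) (Polynomial (UniversalEnvelopingAlgebra ℂ (TruncPoly ℓ ⊗[ℂ] g))) :=
    Matrix.of fun k l => Polynomial.C (algebraMap ℂ (UniversalEnvelopingAlgebra ℂ (TruncPoly ℓ ⊗[ℂ] g))
      (ρ (fElem ρ Jup Jlo i j) k l)) with hMl
  have hM : ∀ (k l : Fin N) y, Ml k l * y = y * Ml k l := by
    intro k l y
    have hrfl : Ml k l = algebraMap ℂ
        (Polynomial (UniversalEnvelopingAlgebra ℂ (TruncPoly ℓ ⊗[ℂ] g)))
        (ρ (fElem ρ Jup Jlo i j) k l) := rfl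
    rw [hrfl]
    exact Algebra.commutes _ _
  have hK1 : ∀ k l, (T * F k l - F k l * T) * Polynomial.X
      = ((F - Δm) * Ml - Ml * (F - Δm)) k l := by
    intro k l
    rw [hT, hF, aux_hKey B Jup Jlo ρ hBsymm hBinv hdual ℓ i j k l]
    simp only [Matrix.sub_apply, Matrix.mul_apply, hΔm, hMl, Matrix.of_apply, hF]
    congr 1
    refine Finset.sum_congr rfl fun p _ => ?_
    exact Algebra.commutes
      (R := ℂ) (A := Polynomial (UniversalEnvelopingAlgebra ℂ (TruncPoly ℓ ⊗[ℂ] g)))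
      (ρ (fElem ρ Jup Jlo i j) p l) _
  have main := aux_matrix_comm F Δm Ml T Polynomial.X (fun y => Polynomial.X_mul) hM hK1 m
  rw [Ring.lie_def]
  rw [show (T * (F ^ m).trace - (F ^ m).trace * T).coeff r
      = ((T * (F ^ m).trace - (F ^ m).trace * T) * Polynomial.X).coeff (r+1) from
      (Polynomial.coeff_mul_X _ r).symm]
  rw [main, Polynomial.coeff_neg]
  have hFdeg : ∀ k l, (F k l).natDegree ≤ ℓ := by
    intro k l
    rw [hF, takiffFMat, Matrix.of_apply]
    apply Polynomial.natDegree_sum_le_of_forall_le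
    intro s _
    refine le_trans (Polynomial.natDegree_mul_le) (le_trans
      (add_le_add (Polynomial.natDegree_C _).le (Polynomial.natDegree_X_pow_le _)) ?_)
    simpa using Fin.is_le s
  have hGdeg : ∀ k l : Fin N, ((Δm * Ml - Ml * Δm) k l).natDegree ≤ 0 := by
    have hΔd : ∀ k l : Fin N, (Δm k l).natDegree ≤ 0 := by
      intro k l; rw [hΔm, Matrix.of_apply, Polynomial.natDegree_C]
    have hMd : ∀ k l : Fin N, (Ml k l).natDegree ≤ 0 := by
      intro k l; rw [hMl, Matrix.of_apply, Polynomial.natDegree_C]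
    intro k l
    rw [Matrix.sub_apply]
    refine le_trans (Polynomial.natDegree_sub_le _ _) ?_
    exact max_le (aux_entry_deg_mul Δm Ml 0 0 hΔd hMd k l)
      (aux_entry_deg_mul Ml Δm 0 0 hMd hΔd k l)
  have hdeg : (∑ k ∈ Finset.range m,
      (F ^ k * (Δm * Ml - Ml * Δm) * F ^ (m - 1 - k)).trace).natDegree ≤ (m-1) * ℓ := by
    apply Polynomial.natDegree_sum_le_of_forall_le
    intro k hk
    rw [Matrix.trace]
    apply Polynomial.natDegree_sum_le_of_forall_le
    intro a _
    rw [Matrix.diag_apply]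
    have h1 := aux_entry_deg_mul (F ^ k * (Δm * Ml - Ml * Δm)) (F ^ (m - 1 - k))
      (k * ℓ + 0) ((m - 1 - k) * ℓ)
      (aux_entry_deg_mul (F ^ k) (Δm * Ml - Ml * Δm) (k * ℓ) 0
        (aux_entry_deg_pow F ℓ hFdeg k) hGdeg)
      (aux_entry_deg_pow F ℓ hFdeg (m - 1 - k)) a a
    refine le_trans h1 ?_
    have hk' := Finset.mem_range.mp hk
    calc k * ℓ + 0 + (m - 1 - k) * ℓ = (k + (m - 1 - k)) * ℓ := by
          rw [add_zero, ← add_mul]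
      _ ≤ (m - 1) * ℓ := Nat.mul_le_mul_right ℓ (by omega)
  have hlt : (m - 1) * ℓ < r + 1 := by
    have he : (m - 1) * ℓ = m * ℓ - ℓ := by
      cases m with
      | zero => omega
      | succ m' =>
        rw [Nat.succ_sub_one, Nat.succ_mul]
        omega
    omega
  rw [Polynomial.coeff_eq_zero_of_natDegree_lt (lt_of_le_of_lt hdeg hlt), neg_zero]
end
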